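/- Let H ⊆ ℝ be a bounded Lebesgue measurable set with λ(H) > 0. Then {x ∈ ℝ : for every ε > 0 there exists L ⊆ S(x, ε) such that H ∖ L is Lebesgue measurable, λ(H ∖ L) > 0, and Avg(H ∖ L) ≠ Avg(H)} = {x ∈ ℝ : for every δ > 0, λ(H ∩ S(x, δ)) > 0}. -/

import Mathlib

open MeasureTheory

/-- The mean `Avg` by Lebesgue measure. -/
noncomputable def avg (H : Set ℝ) : ℝ := (∫ x in H, x) / (volume H).toReal

lemma avg_aux (H : Set ℝ) (hm : MeasurableSet H) (hfin : volume H ≠ ⊤)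
    (hpos : 0 < volume H) (hint : IntegrableOn (fun t : ℝ => t) H)
    (A : Set ℝ) (hA : MeasurableSet A)
    (hI : (∫ t in H ∩ A, (t - avg H)) ≠ 0) :
    MeasurableSet (H \ A) ∧ 0 < volume (H \ A) ∧ avg (H \ A) ≠ avg H := by
  have hmr : (volume H).toReal ≠ 0 := by
    simp [ENNReal.toReal_ne_zero, hpos.ne', hfin]
  have hconst : IntegrableOn (fun _ : ℝ => avg H) H := by
    exact integrableOn_const hfin
  have hintf : IntegrableOn (fun t : ℝ => t - avg H) H := hint.sub hconst
  have hH0 : (∫ t in H, (t - avg H)) = 0 := by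
    rw [integral_sub hint hconst, setIntegral_const]
    simp only [smul_eq_mul, avg, measureReal_def]
    field_simp
    ring
  have hdiff : (∫ t in H \ A, (t - avg H)) = - ∫ t in H ∩ A, (t - avg H) := by
    have h1 : H \ A = H \ (H ∩ A) := (Set.diff_self_inter).symm
    rw [h1, integral_diff (hm.inter hA) hintf Set.inter_subset_left, hH0]
    ring
  have hIne : (∫ t in H \ A, (t - avg H)) ≠ 0 := by
    rw [hdiff]; exact neg_ne_zero.2 hI
  have hmd : MeasurableSet (H \ A) := hm.diff hA
  have hvol : 0 < volume (H \ A) := by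
    rcases eq_or_lt_of_le (zero_le : 0 ≤ volume (H \ A)) with h0 | h0
    · exfalso
      apply hIne
      have : volume.restrict (H \ A) = 0 := by
        simp [Measure.restrict_eq_zero, ← h0]
      rw [this, integral_zero_measure]
    · exact h0
  refine ⟨hmd, hvol, ?_⟩
  have hfind : volume (H \ A) ≠ ⊤ :=
    (lt_of_le_of_lt (measure_mono Set.diff_subset) hfin.lt_top).ne
  have hmr' : (volume (H \ A)).toReal ≠ 0 := by
    simp [ENNReal.toReal_ne_zero, hvol.ne', hfind]
  intro heq
  apply hIne
  have hintd : IntegrableOn (fun t : ℝ => t) (H \ A) := hint.mono_set Set.diff_subset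
  have hconstd : IntegrableOn (fun _ : ℝ => avg H) (H \ A) := hconst.mono_set Set.diff_subset
  rw [integral_sub hintd hconstd, setIntegral_const, measureReal_def, smul_eq_mul, sub_eq_zero]
  unfold avg at heq
  rw [div_eq_iff hmr'] at heq
  rw [heq]
  unfold avg
  ring

theorem accPoints_avg_eq (H : Set ℝ)
    (hb : Bornology.IsBounded H) (hm : MeasurableSet H) (hpos : 0 < volume H) :
    {x : ℝ | ∀ ε > 0, ∃ L : Set ℝ, L ⊆ Metric.ball x ε ∧
        MeasurableSet (H \ L) ∧ 0 < volume (H \ L) ∧ avg (H \ L) ≠ avg H} =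
      {x : ℝ | ∀ δ > 0, 0 < volume (H ∩ Metric.ball x δ)} := by
  have hfin : volume H ≠ ⊤ := hb.measure_lt_top.ne
  have hint : IntegrableOn (fun t : ℝ => t) H := by
    obtain ⟨C, hC⟩ := hb.subset_closedBall 0
    have h1 : IntegrableOn (fun t : ℝ => t) (Metric.closedBall (0:ℝ) C) :=
      ContinuousOn.integrableOn_compact (isCompact_closedBall 0 C) continuousOn_id
    exact h1.mono_set hC
  ext x
  simp only [Set.mem_setOf_eq]
  constructor
  · intro h δ hδ
    by_contra hc
    push_neg at hc
    have hnull : volume (H ∩ Metric.ball x δ) = 0 := le_antisymm hc zero_le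
    obtain ⟨L, hLsub, hLm, hLpos, hLne⟩ := h δ hδ
    apply hLne
    have hae : (H \ L : Set ℝ) =ᵐ[volume] (H : Set ℝ) := by
      rw [diff_ae_eq_self]
      exact measure_mono_null (Set.inter_subset_inter_right H hLsub) hnull
    unfold avg
    rw [setIntegral_congr_set hae, measure_congr hae]
  · intro h ε hε
    set a := avg H with ha
    have hball : 0 < volume (H ∩ Metric.ball x ε) := h ε hε
    have hsub : H ∩ Metric.ball x ε ⊆
        (H ∩ (Metric.ball x ε ∩ {t : ℝ | a < t})) ∪
          ((H ∩ (Metric.ball x ε ∩ {t : ℝ | t < a})) ∪ {a}) := by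
      intro t ⟨htH, htb⟩
      rcases lt_trichotomy a t with hlt | heq | hgt
      · exact Or.inl ⟨htH, htb, hlt⟩
      · exact Or.inr (Or.inr heq.symm)
      · exact Or.inr (Or.inl ⟨htH, htb, hgt⟩)
    have hsplit : 0 < volume (H ∩ (Metric.ball x ε ∩ {t : ℝ | a < t})) ∨
        0 < volume (H ∩ (Metric.ball x ε ∩ {t : ℝ | t < a})) := by
      by_contra hc
      push_neg at hc
      obtain ⟨h1, h2⟩ := hc
      have h1' : volume (H ∩ (Metric.ball x ε ∩ {t : ℝ | a < t})) = 0 :=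
        le_antisymm h1 zero_le
      have h2' : volume (H ∩ (Metric.ball x ε ∩ {t : ℝ | t < a})) = 0 :=
        le_antisymm h2 zero_le
      have hz : volume (H ∩ Metric.ball x ε) = 0 :=
        measure_mono_null hsub
          (measure_union_null h1' (measure_union_null h2' Real.volume_singleton))
      exact absurd hz hball.ne'
    rcases hsplit with hside | hside
    · set A : Set ℝ := Metric.ball x ε ∩ {t : ℝ | a < t} with hA
      have hAm : MeasurableSet A := measurableSet_ball.inter (measurableSet_Ioi (a := a))
      have hca : IntegrableOn (fun _ : ℝ => a) H := integrableOn_const hfin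
      have hintH : IntegrableOn (fun t : ℝ => t - a) H := hint.sub hca
      have hintA : IntegrableOn (fun t : ℝ => t - a) (H ∩ A) :=
        hintH.mono_set Set.inter_subset_left
      have hIpos : 0 < ∫ t in H ∩ A, (t - a) := by
        rw [setIntegral_pos_iff_support_of_nonneg_ae ?_ hintA]
        · have hss : H ∩ A ⊆ Function.support (fun t : ℝ => t - a) := by
            intro t ⟨_, _, htg⟩
            simp only [Function.mem_support]
            exact sub_ne_zero.2 htg.ne'
          rwa [Set.inter_eq_right.2 hss]
        · filter_upwards [ae_restrict_mem (hm.inter hAm)] with t ht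
          exact sub_nonneg.2 (le_of_lt ht.2.2)
      obtain ⟨hh1, hh2, hh3⟩ := avg_aux H hm hfin hpos hint A hAm (ne_of_gt hIpos)
      exact ⟨A, Set.inter_subset_left, hh1, hh2, hh3⟩
    · set A : Set ℝ := Metric.ball x ε ∩ {t : ℝ | t < a} with hA
      have hAm : MeasurableSet A := measurableSet_ball.inter (measurableSet_Iio (a := a))
      have hca : IntegrableOn (fun _ : ℝ => a) H := integrableOn_const hfin
      have hintH : IntegrableOn (fun t : ℝ => a - t) H := hca.sub hint
      have hintA : IntegrableOn (fun t : ℝ => a - t) (H ∩ A) :=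
        hintH.mono_set Set.inter_subset_left
      have hIpos : 0 < ∫ t in H ∩ A, (a - t) := by
        rw [setIntegral_pos_iff_support_of_nonneg_ae ?_ hintA]
        · have hss : H ∩ A ⊆ Function.support (fun t : ℝ => a - t) := by
            intro t ⟨_, _, htg⟩
            simp only [Function.mem_support]
            exact sub_ne_zero.2 htg.ne'
          rwa [Set.inter_eq_right.2 hss]
        · filter_upwards [ae_restrict_mem (hm.inter hAm)] with t ht
          exact sub_nonneg.2 (le_of_lt ht.2.2)
      have hIne : (∫ t in H ∩ A, (t - a)) ≠ 0 := by
        have : (∫ t in H ∩ A, (t - a)) = - ∫ t in H ∩ A, (a - t) := by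
          rw [← integral_neg]
          congr 1 with t
          ring
        rw [this]
        exact neg_ne_zero.2 (ne_of_gt hIpos)
      obtain ⟨hh1, hh2, hh3⟩ := avg_aux H hm hfin hpos hint A hAm hIne
      exact ⟨A, Set.inter_subset_left, hh1, hh2, hh3⟩
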